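/- Let 0 < β < α < 1 and l, x > 0. Then there exists ξ ∈ (0,l) such that |(l+x)^{α-1} - x^{α-1}| = l^β (ξ+x)^{α-β-1} · ((1-α)/(Γ(1+β)Γ(1-β))) · ∫_{x/(ξ+x)}^1 (1-w)^{-β} w^{α-2} dw. -/

import Mathlib

open MeasureTheory intervalIntegral Set
open scoped ENNReal

lemma realBeta {β : ℝ} (hβ : 0 < β) (hβ1 : β < 1) :
    ∫ v in (0:ℝ)..1, v ^ (-β) * (1 - v) ^ (β - 1) =
      Real.Gamma (1 - β) * Real.Gamma β := by
  have h1 : (0:ℝ) < 1 - β := by linarith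
  have key : ((∫ v in (0:ℝ)..1, v ^ (-β) * (1 - v) ^ (β - 1) : ℝ) : ℂ)
      = Complex.betaIntegral (1 - β) β := by
    rw [Complex.betaIntegral, ← intervalIntegral.integral_ofReal]
    apply intervalIntegral.integral_congr
    intro v hv
    rw [Set.uIcc_of_le (by norm_num : (0:ℝ) ≤ 1)] at hv
    obtain ⟨hv0, hv1⟩ := hv
    have h1v : (0:ℝ) ≤ 1 - v := by linarith
    have e1 : (1 - (β:ℂ) - 1) = ((-β : ℝ) : ℂ) := by push_cast; ring
    have e2 : ((β:ℂ) - 1) = ((β - 1 : ℝ) : ℂ) := by push_cast; ring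
    have e3 : (1 - (v:ℂ)) = ((1 - v : ℝ) : ℂ) := by push_cast; ring
    simp only []
    rw [e1, e2, e3, ← Complex.ofReal_cpow hv0, ← Complex.ofReal_cpow h1v]
    push_cast
    ring
  have h2 : Complex.Gamma (1 - β) * Complex.Gamma β
      = Complex.Gamma ((1 - β) + β) * Complex.betaIntegral (1 - β) β :=
    Complex.Gamma_mul_Gamma_eq_betaIntegral (by simpa using h1) (by simpa using hβ)
  rw [show ((1:ℂ) - β) + β = 1 by ring, Complex.Gamma_one, one_mul] at h2
  have h3 : ((Real.Gamma (1 - β) * Real.Gamma β : ℝ) : ℂ)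
      = Complex.betaIntegral (1 - β) β := by
    rw [Complex.ofReal_mul, ← Complex.Gamma_ofReal, ← Complex.Gamma_ofReal, ← h2]
    norm_num
  rw [← h3] at key
  exact_mod_cast key

lemma intgL {r : ℝ} (hr : -1 < r) (c a b : ℝ) :
    IntervalIntegrable (fun t => (c - t) ^ r) volume a b := by
  have h := (intervalIntegrable_rpow' hr (a := c - a) (b := c - b)).comp_sub_left c
  simpa using h

lemma intgR {r : ℝ} (hr : -1 < r) (c a b : ℝ) :
    IntervalIntegrable (fun t => (t - c) ^ r) volume a b := by
  have h := (intervalIntegrable_rpow' hr (a := a - c) (b := b - c)).comp_sub_right c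
  simpa using h

lemma kerInt {β s l : ℝ} (hβ : 0 < β) (hβ1 : β < 1) (hsl : s < l) :
    IntervalIntegrable (fun t => (l - t) ^ (β - 1) * (t - s) ^ (-β)) volume s l := by
  have hm1 : s < (s + l) / 2 := by linarith
  have hm2 : (s + l) / 2 < l := by linarith
  have h1 : IntervalIntegrable (fun t => (l - t) ^ (β - 1) * (t - s) ^ (-β))
      volume s ((s + l) / 2) := by
    apply IntervalIntegrable.continuousOn_mul (intgR (by linarith) s _ _)
    apply ContinuousOn.rpow_const
    · exact (continuous_const.sub continuous_id).continuousOn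
    · intro t ht
      rw [Set.uIcc_of_le hm1.le] at ht
      exact Or.inl (by nlinarith [ht.2])
  have h2 : IntervalIntegrable (fun t => (l - t) ^ (β - 1) * (t - s) ^ (-β))
      volume ((s + l) / 2) l := by
    apply IntervalIntegrable.mul_continuousOn (intgL (by linarith) l _ _)
    apply ContinuousOn.rpow_const
    · exact (continuous_id.sub continuous_const).continuousOn
    · intro t ht
      rw [Set.uIcc_of_le hm2.le] at ht
      exact Or.inl (by nlinarith [ht.1])
  exact h1.trans h2

lemma kernelBeta {β s l : ℝ} (hβ : 0 < β) (hβ1 : β < 1) (hsl : s < l) :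
    ∫ t in s..l, (l - t) ^ (β - 1) * (t - s) ^ (-β)
      = ∫ v in (0:ℝ)..1, v ^ (-β) * (1 - v) ^ (β - 1) := by
  have hc : (0:ℝ) < l - s := by linarith
  have key := intervalIntegral.integral_comp_mul_add
    (f := fun t => (l - t) ^ (β - 1) * (t - s) ^ (-β)) (a := 0) (b := 1) hc.ne' s
  simp only [mul_zero, zero_add, mul_one] at key
  rw [show l - s + s = l by ring] at key
  have congr1 : ∀ v ∈ Set.uIcc (0:ℝ) 1,
      (l - ((l - s) * v + s)) ^ (β - 1) * ((l - s) * v + s - s) ^ (-β)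
        = (l - s)⁻¹ * ((1 - v) ^ (β - 1) * v ^ (-β)) := by
    intro v hv
    rw [Set.uIcc_of_le (by norm_num : (0:ℝ) ≤ 1)] at hv
    have h1 : l - ((l - s) * v + s) = (l - s) * (1 - v) := by ring
    have h2 : (l - s) * v + s - s = (l - s) * v := by ring
    rw [h1, h2, Real.mul_rpow hc.le (by linarith [hv.2]), Real.mul_rpow hc.le hv.1]
    have h3 : (l - s) ^ (β - 1) * (l - s) ^ (-β) = (l - s)⁻¹ := by
      rw [← Real.rpow_add hc, show β - 1 + -β = -1 by ring, Real.rpow_neg_one]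
    calc (l - s) ^ (β - 1) * (1 - v) ^ (β - 1) * ((l - s) ^ (-β) * v ^ (-β))
        = ((l - s) ^ (β - 1) * (l - s) ^ (-β)) * ((1 - v) ^ (β - 1) * v ^ (-β)) := by ring
      _ = (l - s)⁻¹ * ((1 - v) ^ (β - 1) * v ^ (-β)) := by rw [h3]
  rw [intervalIntegral.integral_congr congr1, intervalIntegral.integral_const_mul] at key
  rw [smul_eq_mul] at key
  have key2 : ∫ t in s..l, (l - t) ^ (β - 1) * (t - s) ^ (-β)
      = ∫ v in (0:ℝ)..1, (1 - v) ^ (β - 1) * v ^ (-β) :=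
    (mul_left_cancel₀ (inv_ne_zero hc.ne') key).symm
  rw [key2]
  apply intervalIntegral.integral_congr
  intro v _
  simp only []
  ring

lemma intC {α l x : ℝ} (hα : α < 1) (hl : 0 < l) (hx : 0 < x) :
    ∫ s in (0:ℝ)..l, (s + x) ^ (α - 2)
      = (x ^ (α - 1) - (l + x) ^ (α - 1)) / (1 - α) := by
  have h := intervalIntegral.integral_comp_add_right (a := 0) (b := l)
    (f := fun u => u ^ (α - 2)) x
  have hmem : (0:ℝ) ∉ Set.uIcc (0 + x) (l + x) := by
    rw [zero_add, Set.uIcc_of_le (by linarith : x ≤ l + x)]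
    rintro ⟨h1, -⟩; linarith
  rw [h, integral_rpow (Or.inr ⟨by intro h'; linarith, hmem⟩), zero_add]
  have h1 : α - 2 + 1 = α - 1 := by ring
  rw [h1]
  generalize (l + x) ^ (α - 1) = A
  generalize x ^ (α - 1) = B
  have h2 : α - 1 ≠ 0 := by intro h'; linarith [sub_eq_zero.mp h']
  have h3 : (1:ℝ) - α ≠ 0 := by intro h'; linarith [sub_eq_zero.mp h']
  field_simp
  ring

noncomputable def Efun (α β x t : ℝ) : ℝ :=
  ∫ u in (0:ℝ)..1, (1 - u) ^ (-β) * (|t| * u + x) ^ (α - 2)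

lemma Efun_cont {α β x : ℝ} (hβ : 0 < β) (hβ1 : β < 1) (hα : α < 1) (hx : 0 < x) :
    Continuous (fun t => Efun α β x t) := by
  apply intervalIntegral.continuous_of_dominated_interval
    (bound := fun u => (1 - u) ^ (-β) * x ^ (α - 2))
  · intro t
    apply Measurable.aestronglyMeasurable
    exact ((continuous_const.sub continuous_id).measurable.pow_const _).mul
      ((((continuous_const.mul continuous_id).add continuous_const).measurable).pow_const _)
  · intro t
    filter_upwards with u hu
    rw [Set.uIoc_of_le (by norm_num : (0:ℝ) ≤ 1)] at hu
    have h1u : (0:ℝ) ≤ 1 - u := by linarith [hu.2]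
    have hbase : x ≤ |t| * u + x := by
      have : 0 ≤ |t| * u := mul_nonneg (abs_nonneg t) hu.1.le
      linarith
    have hb2 : (0:ℝ) < |t| * u + x := by linarith
    rw [Real.norm_eq_abs, abs_of_nonneg (mul_nonneg (Real.rpow_nonneg h1u _)
      (Real.rpow_nonneg hb2.le _))]
    exact mul_le_mul_of_nonneg_left
      (Real.rpow_le_rpow_of_nonpos hx hbase (by linarith))
      (Real.rpow_nonneg h1u _)
  · exact (intgL (by linarith : (-1:ℝ) < -β) 1 0 1).mul_const _
  · filter_upwards with u
    intro hu
    rw [Set.uIoc_of_le (by norm_num : (0:ℝ) ≤ 1)] at hu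
    apply continuous_const.mul
    apply Continuous.rpow_const
    · exact (continuous_abs.mul continuous_const).add continuous_const
    · intro t
      left
      have h1 : 0 ≤ |t| * u := mul_nonneg (abs_nonneg t) hu.1.le
      nlinarith

lemma Dc_cont {α β x : ℝ} (hβ : 0 < β) (hβ1 : β < 1) (hα : α < 1) (hx : 0 < x) :
    Continuous (fun t => |t| ^ (1 - β) * Efun α β x t) :=
  (continuous_abs.rpow_const (fun _ => Or.inr (by linarith))).mul
    (Efun_cont hβ hβ1 hα hx)

lemma D_eq_Dc {α β x : ℝ} (hβ : 0 < β) (hβ1 : β < 1) (hα : α < 1) (hx : 0 < x)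
    {t : ℝ} (ht : 0 ≤ t) :
    ∫ s in (0:ℝ)..t, (t - s) ^ (-β) * (s + x) ^ (α - 2)
      = |t| ^ (1 - β) * Efun α β x t := by
  rcases eq_or_lt_of_le ht with h | h
  · rw [← h, intervalIntegral.integral_same, abs_zero,
      Real.zero_rpow (by intro h'; linarith), zero_mul]
  · have habs : |t| = t := abs_of_pos h
    have key := intervalIntegral.integral_comp_mul_left
      (f := fun s => (t - s) ^ (-β) * (s + x) ^ (α - 2)) (a := 0) (b := 1) h.ne'
    simp only [mul_zero, mul_one] at key
    have congr1 : ∀ u ∈ Set.uIcc (0:ℝ) 1,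
        (t - t * u) ^ (-β) * (t * u + x) ^ (α - 2)
          = t ^ (-β) * ((1 - u) ^ (-β) * (|t| * u + x) ^ (α - 2)) := by
      intro u hu
      rw [Set.uIcc_of_le (by norm_num : (0:ℝ) ≤ 1)] at hu
      rw [show t - t * u = t * (1 - u) by ring,
        Real.mul_rpow h.le (by linarith [hu.2]), habs]
      ring
    rw [intervalIntegral.integral_congr congr1,
      intervalIntegral.integral_const_mul] at key
    rw [smul_eq_mul] at key
    have key2 := congrArg (fun z => t * z) key
    simp only [← mul_assoc, mul_inv_cancel₀ h.ne', one_mul] at key2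
    have : ∫ s in (0:ℝ)..t, (t - s) ^ (-β) * (s + x) ^ (α - 2)
        = t * (t ^ (-β) * Efun α β x t) := by
      rw [Efun, ← mul_assoc, ← key2]
    rw [this, habs, ← mul_assoc, ← Real.rpow_one_add' h.le (by intro h'; linarith),
      show (1:ℝ) + -β = 1 - β by ring]

lemma substRHS {α β x ξ : ℝ} (hβ : 0 < β) (hξ : 0 < ξ) (hx : 0 < x) :
    ∫ w in (x / (ξ + x))..1, (1 - w) ^ (-β) * w ^ (α - 2)
      = (ξ + x) ^ (β + 1 - α) * ∫ s in (0:ℝ)..ξ, (ξ - s) ^ (-β) * (s + x) ^ (α - 2) := by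
  have hc : (0:ℝ) < ξ + x := by linarith
  have key := intervalIntegral.integral_comp_div_add
    (f := fun w => (1 - w) ^ (-β) * w ^ (α - 2)) (a := 0) (b := ξ) hc.ne' (x / (ξ + x))
  rw [show (0:ℝ) / (ξ + x) + x / (ξ + x) = x / (ξ + x) by ring,
    show ξ / (ξ + x) + x / (ξ + x) = 1 by field_simp] at key
  have congr1 : ∀ s ∈ Set.uIcc (0:ℝ) ξ,
      (1 - (s / (ξ + x) + x / (ξ + x))) ^ (-β) * (s / (ξ + x) + x / (ξ + x)) ^ (α - 2)
        = (ξ + x) ^ (β + 2 - α) * ((ξ - s) ^ (-β) * (s + x) ^ (α - 2)) := by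
    intro s hs
    rw [Set.uIcc_of_le hξ.le] at hs
    have h1 : 1 - (s / (ξ + x) + x / (ξ + x)) = (ξ - s) / (ξ + x) := by
      field_simp
      ring
    have h2 : s / (ξ + x) + x / (ξ + x) = (s + x) / (ξ + x) := by ring
    rw [h1, h2, Real.div_rpow (by linarith [hs.2]) hc.le,
      Real.div_rpow (by linarith [hs.1]) hc.le]
    rw [div_mul_div_comm, div_eq_mul_inv, ← Real.rpow_add hc, ← Real.rpow_neg hc.le,
      show -(-β + (α - 2)) = β + 2 - α by ring]
    ring
  rw [intervalIntegral.integral_congr congr1,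
    intervalIntegral.integral_const_mul, smul_eq_mul] at key
  -- key : (ξ+x)^(β+2-α) * D = (ξ+x) * ∫ w ...
  have h3 : (ξ + x) ^ (β + 1 - α) * ∫ s in (0:ℝ)..ξ, (ξ - s) ^ (-β) * (s + x) ^ (α - 2)
      = (ξ + x)⁻¹ * ((ξ + x) ^ (β + 2 - α)
        * ∫ s in (0:ℝ)..ξ, (ξ - s) ^ (-β) * (s + x) ^ (α - 2)) := by
    rw [← mul_assoc, ← Real.rpow_neg_one (ξ + x), ← Real.rpow_add hc,
      show (-1:ℝ) + (β + 2 - α) = β + 1 - α by ring]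
  rw [h3, key, ← mul_assoc, inv_mul_cancel₀ hc.ne', one_mul]

lemma kIntS {α β x : ℝ} (hβ : 0 < β) (hβ1 : β < 1) (hx : 0 < x) {t : ℝ} (ht : 0 ≤ t) :
    IntervalIntegrable (fun s => (t - s) ^ (-β) * (s + x) ^ (α - 2)) volume 0 t := by
  apply IntervalIntegrable.mul_continuousOn (intgL (by linarith) t 0 t)
  apply ContinuousOn.rpow_const ((continuous_id.add continuous_const).continuousOn)
  intro s hs
  rw [Set.uIcc_of_le ht] at hs
  exact Or.inl (fun h => by change s + x = 0 at h; nlinarith [hs.1])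

lemma fubiniKey {α β l x : ℝ} (hβ : 0 < β) (hβα : β < α) (hα : α < 1)
    (hl : 0 < l) (hx : 0 < x) :
    ∫ t in (0:ℝ)..l, (l - t) ^ (β - 1)
        * ∫ s in (0:ℝ)..t, (t - s) ^ (-β) * (s + x) ^ (α - 2)
      = (∫ v in (0:ℝ)..1, v ^ (-β) * (1 - v) ^ (β - 1))
          * ∫ s in (0:ℝ)..l, (s + x) ^ (α - 2) := by
  have hβ1 : β < 1 := lt_trans hβα hα
  set ψ : ℝ → ℝ := fun s => (s + x) ^ (α - 2) with hψ
  set ker : ℝ → ℝ → ℝ := fun t s => (max (t - s) 0) ^ (-β) with hker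
  set Cβ : ℝ := ∫ v in (0:ℝ)..1, v ^ (-β) * (1 - v) ^ (β - 1) with hCβ
  set fE : ℝ → ℝ → ℝ≥0∞ :=
    fun t s => ENNReal.ofReal ((l - t) ^ (β - 1) * (ker t s * ψ s)) with hfE
  set D : ℝ → ℝ := fun t => ∫ s in (0:ℝ)..t, (t - s) ^ (-β) * (s + x) ^ (α - 2) with hD
  -- nonnegativity facts
  have hψ_nn : ∀ s : ℝ, 0 ≤ s → 0 ≤ ψ s := fun s hs =>
    Real.rpow_nonneg (by linarith) _
  have hD_nn : ∀ t : ℝ, 0 ≤ t → 0 ≤ D t := by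
    intro t ht
    apply intervalIntegral.integral_nonneg ht
    intro s hs
    exact mul_nonneg (Real.rpow_nonneg (by linarith [hs.2]) _) (hψ_nn s hs.1)
  -- measurability of the uncurried integrand
  have h_meas : Measurable (Function.uncurry fE) := by
    apply Measurable.ennreal_ofReal
    apply Measurable.mul
    · exact ((continuous_const.sub continuous_fst).measurable).pow_const _
    · apply Measurable.mul
      · exact (((continuous_fst.sub continuous_snd).max continuous_const).measurable).pow_const _
      · exact ((continuous_snd.add continuous_const).measurable).pow_const _
  -- Tonelli swap
  have swap : ∫⁻ t in Ioo 0 l, ∫⁻ s in Ioo 0 l, fE t s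
      = ∫⁻ s in Ioo 0 l, ∫⁻ t in Ioo 0 l, fE t s := by
    exact lintegral_lintegral_swap h_meas.aemeasurable
  -- side 1
  have side1 : ∀ t ∈ Ioo (0:ℝ) l,
      ∫⁻ s in Ioo 0 l, fE t s = ENNReal.ofReal ((l - t) ^ (β - 1) * D t) := by
    intro t ht
    have hlt : (0:ℝ) ≤ (l - t) ^ (β - 1) := Real.rpow_nonneg (by linarith [ht.2]) _
    have step1 : ∀ s : ℝ, fE t s
        = ENNReal.ofReal ((l - t) ^ (β - 1)) * ENNReal.ofReal (ker t s * ψ s) := by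
      intro s
      rw [hfE, ← ENNReal.ofReal_mul hlt]
    simp only [step1]
    rw [lintegral_const_mul' _ _ ENNReal.ofReal_ne_top]
    have hsplit : Ioo (0:ℝ) l = Ioo 0 t ∪ Ico t l :=
      (Set.Ioo_union_Ico_eq_Ioo ht.1 ht.2.le).symm
    rw [hsplit, lintegral_union measurableSet_Ico
      (Set.disjoint_left.mpr (fun s hs1 hs2 => absurd hs1.2 (not_lt.mpr hs2.1)))]
    have hzero : ∫⁻ s in Ico t l, ENNReal.ofReal (ker t s * ψ s) = 0 := by
      rw [setLIntegral_congr_fun measurableSet_Ico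
        (fun s hs => ?_), lintegral_zero]
      rw [hker]
      simp only []
      rw [max_eq_right (by linarith [hs.1] : t - s ≤ 0),
        Real.zero_rpow (neg_ne_zero.mpr hβ.ne'), zero_mul, ENNReal.ofReal_zero]
    rw [hzero, add_zero]
    have hcongr : ∫⁻ s in Ioo 0 t, ENNReal.ofReal (ker t s * ψ s)
        = ∫⁻ s in Ioo 0 t, ENNReal.ofReal ((t - s) ^ (-β) * ψ s) := by
      apply setLIntegral_congr_fun measurableSet_Ioo
      intro s hs
      rw [hker]
      simp only []
      rw [max_eq_left (by linarith [hs.2] : 0 ≤ t - s)]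
    rw [hcongr]
    have hInt : IntegrableOn (fun s => (t - s) ^ (-β) * ψ s) (Ioo 0 t) volume := by
      have h1 := (kIntS hβ hβ1 hx ht.1.le (α := α))
      rw [intervalIntegrable_iff, Set.uIoc_of_le ht.1.le] at h1
      exact h1.mono_set Set.Ioo_subset_Ioc_self
    have hnn : 0 ≤ᵐ[volume.restrict (Ioo 0 t)] fun s => (t - s) ^ (-β) * ψ s := by
      filter_upwards [ae_restrict_mem measurableSet_Ioo] with s hs
      exact mul_nonneg (Real.rpow_nonneg (by linarith [hs.2]) _) (hψ_nn s hs.1.le)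
    rw [← ofReal_integral_eq_lintegral_ofReal hInt hnn,
      ← ENNReal.ofReal_mul hlt]
    congr 1
    rw [hD]
    simp only []
    rw [intervalIntegral.integral_of_le ht.1.le, integral_Ioc_eq_integral_Ioo]
  -- side 2
  have side2 : ∀ s ∈ Ioo (0:ℝ) l,
      ∫⁻ t in Ioo 0 l, fE t s = ENNReal.ofReal (ψ s) * ENNReal.ofReal Cβ := by
    intro s hs
    have step1 : ∫⁻ t in Ioo 0 l, fE t s
        = ∫⁻ t in Ioo 0 l,
            ENNReal.ofReal ((l - t) ^ (β - 1) * ker t s) * ENNReal.ofReal (ψ s) := by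
      apply setLIntegral_congr_fun measurableSet_Ioo (fun t ht => ?_)
      rw [hfE]
      simp only []
      rw [← ENNReal.ofReal_mul (mul_nonneg (Real.rpow_nonneg (by linarith [ht.2]) _)
        (Real.rpow_nonneg (le_max_right _ _) _))]
      congr 1
      ring
    rw [step1, lintegral_mul_const' _ _ ENNReal.ofReal_ne_top]
    have hsplit : Ioo (0:ℝ) l = Ioc 0 s ∪ Ioo s l :=
      (Set.Ioc_union_Ioo_eq_Ioo hs.1.le hs.2).symm
    rw [hsplit, lintegral_union measurableSet_Ioo
      (Set.disjoint_left.mpr (fun t ht1 ht2 => absurd ht1.2 (not_le.mpr ht2.1)))]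
    have hzero : ∫⁻ t in Ioc 0 s, ENNReal.ofReal ((l - t) ^ (β - 1) * ker t s) = 0 := by
      rw [setLIntegral_congr_fun measurableSet_Ioc
        (fun t ht => ?_), lintegral_zero]
      rw [hker]
      simp only []
      rw [max_eq_right (by linarith [ht.2] : t - s ≤ 0),
        Real.zero_rpow (neg_ne_zero.mpr hβ.ne'), mul_zero, ENNReal.ofReal_zero]
    rw [hzero, zero_add]
    have hcongr : ∫⁻ t in Ioo s l, ENNReal.ofReal ((l - t) ^ (β - 1) * ker t s)
        = ∫⁻ t in Ioo s l, ENNReal.ofReal ((l - t) ^ (β - 1) * (t - s) ^ (-β)) := by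
      apply setLIntegral_congr_fun measurableSet_Ioo (fun t ht => ?_)
      rw [hker]
      simp only []
      rw [max_eq_left (by linarith [ht.1] : 0 ≤ t - s)]
    rw [hcongr]
    have hInt : IntegrableOn (fun t => (l - t) ^ (β - 1) * (t - s) ^ (-β)) (Ioo s l)
        volume := by
      have h1 := kerInt hβ hβ1 hs.2
      rw [intervalIntegrable_iff, Set.uIoc_of_le hs.2.le] at h1
      exact h1.mono_set Set.Ioo_subset_Ioc_self
    have hnn : 0 ≤ᵐ[volume.restrict (Ioo s l)]
        fun t => (l - t) ^ (β - 1) * (t - s) ^ (-β) := by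
      filter_upwards [ae_restrict_mem measurableSet_Ioo] with t ht
      exact mul_nonneg (Real.rpow_nonneg (by linarith [ht.2]) _)
        (Real.rpow_nonneg (by linarith [ht.1]) _)
    rw [← ofReal_integral_eq_lintegral_ofReal hInt hnn]
    rw [mul_comm]
    congr 1
    rw [← integral_Ioc_eq_integral_Ioo, ← intervalIntegral.integral_of_le hs.2.le]
    rw [kernelBeta hβ hβ1 hs.2, hCβ]
  -- assemble
  have hDcont : Continuous (fun t => |t| ^ (1 - β) * Efun α β x t) :=
    Dc_cont hβ hβ1 hα hx
  have hOuterInt : IntegrableOn (fun t => (l - t) ^ (β - 1) * D t) (Ioo 0 l) volume := by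
    have h1 : IntervalIntegrable
        (fun t => (l - t) ^ (β - 1) * (|t| ^ (1 - β) * Efun α β x t)) volume 0 l :=
      IntervalIntegrable.mul_continuousOn (intgL (by linarith) l 0 l)
        hDcont.continuousOn
    rw [intervalIntegrable_iff, Set.uIoc_of_le hl.le] at h1
    apply (h1.mono_set Set.Ioo_subset_Ioc_self).congr_fun ?_ measurableSet_Ioo
    intro t ht
    rw [hD]
    simp only []
    rw [D_eq_Dc hβ hβ1 hα hx ht.1.le]
  have hOuterNN : 0 ≤ᵐ[volume.restrict (Ioo 0 l)] fun t => (l - t) ^ (β - 1) * D t := by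
    filter_upwards [ae_restrict_mem measurableSet_Ioo] with t ht
    exact mul_nonneg (Real.rpow_nonneg (by linarith [ht.2]) _) (hD_nn t ht.1.le)
  have hLHS : ENNReal.ofReal (∫ t in (0:ℝ)..l, (l - t) ^ (β - 1) * D t)
      = ∫⁻ t in Ioo 0 l, ∫⁻ s in Ioo 0 l, fE t s := by
    rw [intervalIntegral.integral_of_le hl.le, integral_Ioc_eq_integral_Ioo,
      ofReal_integral_eq_lintegral_ofReal hOuterInt hOuterNN]
    exact setLIntegral_congr_fun measurableSet_Ioo
      (fun t ht => (side1 t ht).symm)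
  have hψInt : IntegrableOn ψ (Ioo 0 l) volume := by
    have h1 : IntervalIntegrable ψ volume 0 l := by
      apply ContinuousOn.intervalIntegrable
      apply ContinuousOn.rpow_const ((continuous_id.add continuous_const).continuousOn)
      intro s hsm
      rw [Set.uIcc_of_le hl.le] at hsm
      exact Or.inl (fun h => by change s + x = 0 at h; nlinarith [hsm.1])
    rw [intervalIntegrable_iff, Set.uIoc_of_le hl.le] at h1
    exact h1.mono_set Set.Ioo_subset_Ioc_self
  have hψNN : 0 ≤ᵐ[volume.restrict (Ioo 0 l)] ψ := by
    filter_upwards [ae_restrict_mem measurableSet_Ioo] with s hsm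
    exact hψ_nn s hsm.1.le
  have hCβ_nn : 0 ≤ Cβ := by
    rw [hCβ]
    apply intervalIntegral.integral_nonneg (by norm_num)
    intro v hv
    exact mul_nonneg (Real.rpow_nonneg hv.1 _) (Real.rpow_nonneg (by linarith [hv.2]) _)
  have hRHS : ∫⁻ s in Ioo 0 l, ∫⁻ t in Ioo 0 l, fE t s
      = ENNReal.ofReal ((∫ s in (0:ℝ)..l, ψ s) * Cβ) := by
    rw [setLIntegral_congr_fun measurableSet_Ioo side2,
      lintegral_mul_const' _ _ ENNReal.ofReal_ne_top,
      ← ofReal_integral_eq_lintegral_ofReal hψInt hψNN,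
      ← ENNReal.ofReal_mul (integral_nonneg_of_ae hψNN)]
    congr 2
    rw [intervalIntegral.integral_of_le hl.le, integral_Ioc_eq_integral_Ioo]
  have main := hLHS.trans (swap.trans hRHS)
  have hLnn : 0 ≤ ∫ t in (0:ℝ)..l, (l - t) ^ (β - 1) * D t := by
    rw [intervalIntegral.integral_of_le hl.le, integral_Ioc_eq_integral_Ioo]
    exact integral_nonneg_of_ae hOuterNN
  have hRnn : 0 ≤ (∫ s in (0:ℝ)..l, ψ s) * Cβ := by
    apply mul_nonneg ?_ hCβ_nn
    rw [intervalIntegral.integral_of_le hl.le, integral_Ioc_eq_integral_Ioo]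
    exact integral_nonneg_of_ae hψNN
  have := (ENNReal.ofReal_eq_ofReal_iff hLnn hRnn).mp main
  rw [hD] at this
  rw [this]
  ring

theorem stmt14 (α β l x : ℝ) (hβ : 0 < β) (hβα : β < α) (hα : α < 1)
    (hl : 0 < l) (hx : 0 < x) :
    ∃ ξ ∈ Set.Ioo 0 l,
      |(l + x) ^ (α - 1) - x ^ (α - 1)| =
        l ^ β * (ξ + x) ^ (α - β - 1) *
          ((1 - α) / (Real.Gamma (1 + β) * Real.Gamma (1 - β))) *
          ∫ w in (x / (ξ + x))..1, (1 - w) ^ (-β) * w ^ (α - 2) := by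
  have hβ1 : β < 1 := lt_trans hβα hα
  have h1α : (0:ℝ) < 1 - α := by linarith
  set T : ℝ := x ^ (α - 1) - (l + x) ^ (α - 1) with hT
  have hTpos : 0 < T := by
    have := Real.rpow_lt_rpow_of_neg hx (by linarith : x < l + x) (by linarith : α - 1 < 0)
    rw [hT]; linarith
  have habs : |(l + x) ^ (α - 1) - x ^ (α - 1)| = T := by
    rw [abs_of_neg (by rw [hT] at hTpos; linarith), hT]; ring
  set Cv : ℝ := Real.Gamma (1 - β) * Real.Gamma β with hCv
  have hCvpos : 0 < Cv :=
    mul_pos (Real.Gamma_pos_of_pos (by linarith)) (Real.Gamma_pos_of_pos hβ)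
  have hlb : (0:ℝ) < l ^ β := Real.rpow_pos_of_pos hl β
  set Dc : ℝ → ℝ := fun t => |t| ^ (1 - β) * Efun α β x t with hDc
  have hDccont : Continuous Dc := Dc_cont hβ hβ1 hα hx
  have hDc0 : Dc 0 = 0 := by
    rw [hDc]; simp only []
    rw [abs_zero, Real.zero_rpow (by intro h; linarith), zero_mul]
  -- main integral identity, rewritten through Dc
  have hId : ∫ t in (0:ℝ)..l, (l - t) ^ (β - 1) * Dc t
      = Cv * (T / (1 - α)) := by
    have h1 := fubiniKey hβ hβα hα hl hx
    have h2 : ∫ t in (0:ℝ)..l, (l - t) ^ (β - 1) * Dc t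
        = ∫ t in (0:ℝ)..l, (l - t) ^ (β - 1)
            * ∫ s in (0:ℝ)..t, (t - s) ^ (-β) * (s + x) ^ (α - 2) := by
      apply intervalIntegral.integral_congr
      intro t ht
      rw [Set.uIcc_of_le hl.le] at ht
      rw [hDc]
      simp only []
      rw [D_eq_Dc hβ hβ1 hα hx ht.1]
    rw [h2, h1, realBeta hβ hβ1, intC hα hl hx, ← hCv, ← hT]
  have hW : ∫ t in (0:ℝ)..l, (l - t) ^ (β - 1) = l ^ β / β := by
    have h := intervalIntegral.integral_comp_sub_left (a := 0) (b := l)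
      (fun u => u ^ (β - 1)) l
    rw [sub_zero, sub_self] at h
    rw [h, integral_rpow (Or.inl (by linarith)),
      show β - 1 + 1 = β by ring, Real.zero_rpow hβ.ne', sub_zero]
  set M : ℝ := Cv * T * β / ((1 - α) * l ^ β) with hM
  have hMpos : 0 < M := by
    rw [hM]
    positivity
  -- find ξ
  have hexists : ∃ ξ ∈ Set.Ioo (0:ℝ) l, Dc ξ = M := by
    by_contra hcon
    push_neg at hcon
    have hsmall : ∀ t ∈ Set.Ico (0:ℝ) l, Dc t < M := by
      intro t ht
      by_contra hge
      push_neg at hge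
      have ht0 : 0 < t := by
        rcases eq_or_lt_of_le ht.1 with h | h
        · rw [← h, hDc0] at hge; linarith
        · exact h
      rcases eq_or_lt_of_le hge with h | h
      · exact hcon t ⟨ht0, ht.2⟩ h.symm
      · have hmem : M ∈ Set.Ioo (Dc 0) (Dc t) := by
          rw [hDc0]; exact ⟨hMpos, h⟩
        have := intermediate_value_Ioo ht0.le hDccont.continuousOn hmem
        obtain ⟨ξ, hξ, hξval⟩ := this
        exact hcon ξ ⟨hξ.1, lt_of_lt_of_le hξ.2 (le_of_lt ht.2)⟩ hξval
    have hInt1 : IntervalIntegrable (fun t => (l - t) ^ (β - 1) * M) volume 0 l :=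
      (intgL (by linarith) l 0 l).mul_const M
    have hInt2 : IntervalIntegrable (fun t => (l - t) ^ (β - 1) * Dc t) volume 0 l :=
      (intgL (by linarith) l 0 l).mul_continuousOn hDccont.continuousOn
    have hpos : 0 < ∫ t in (0:ℝ)..l, (l - t) ^ (β - 1) * (M - Dc t) := by
      apply intervalIntegral.intervalIntegral_pos_of_pos_on
      · have : (fun t => (l - t) ^ (β - 1) * (M - Dc t))
            = fun t => (l - t) ^ (β - 1) * M - (l - t) ^ (β - 1) * Dc t := by
          funext t; ring
        rw [this]
        exact hInt1.sub hInt2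
      · intro t ht
        apply mul_pos (Real.rpow_pos_of_pos (by linarith [ht.2]) _)
        have := hsmall t ⟨ht.1.le, ht.2⟩
        linarith
      · exact hl
    have hsplit : ∫ t in (0:ℝ)..l, (l - t) ^ (β - 1) * (M - Dc t)
        = (∫ t in (0:ℝ)..l, (l - t) ^ (β - 1) * M)
          - ∫ t in (0:ℝ)..l, (l - t) ^ (β - 1) * Dc t := by
      rw [← intervalIntegral.integral_sub hInt1 hInt2]
      apply intervalIntegral.integral_congr
      intro t _; ring
    rw [hsplit, intervalIntegral.integral_mul_const, hW, hId] at hpos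
    have heq : l ^ β / β * M = Cv * (T / (1 - α)) := by
      rw [hM]
      field_simp
    rw [heq] at hpos
    linarith
  obtain ⟨ξ, hξmem, hξval⟩ := hexists
  refine ⟨ξ, hξmem, ?_⟩
  have hc : (0:ℝ) < ξ + x := by linarith [hξmem.1]
  rw [habs, substRHS hβ hξmem.1 hx, D_eq_Dc hβ hβ1 hα hx hξmem.1.le]
  rw [show (|ξ| ^ (1 - β) * Efun α β x ξ) = Dc ξ from rfl, hξval]
  have hK : Real.Gamma (1 + β) * Real.Gamma (1 - β) = β * Cv := by
    rw [show (1:ℝ) + β = β + 1 by ring, Real.Gamma_add_one hβ.ne', hCv]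
    ring
  rw [hK]
  have hpow : (ξ + x) ^ (α - β - 1) * (ξ + x) ^ (β + 1 - α) = 1 := by
    rw [← Real.rpow_add hc, show α - β - 1 + (β + 1 - α) = 0 by ring, Real.rpow_zero]
  calc T = ((ξ + x) ^ (α - β - 1) * (ξ + x) ^ (β + 1 - α))
        * (l ^ β * ((1 - α) / (β * Cv)) * M) := by
        rw [hpow, one_mul, hM]
        field_simp
    _ = l ^ β * (ξ + x) ^ (α - β - 1) * ((1 - α) / (β * Cv))
        * ((ξ + x) ^ (β + 1 - α) * M) := by ring
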